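/- Let (Ω, 𝓕) be a measurable space whose σ-algebra 𝓕 contains a set F with both F and its complement nonempty (i.e. 𝓕 ≠ {∅, Ω}). Then for every m ≥ 1 there exist probability measures μ₁, …, μ_m and ν₁, …, ν_m on Ω, with the 2m measures μ₁,…,μ_m,ν₁,…,ν_m pairwise distinct, and positive weights a₁,…,a_m and b₁,…,b_m each summing to 1, such that ∑_{i=1}^{m} a_i · μ_i^{×(2m−2)} = ∑_{j=1}^{m} b_j · ν_j^{×(2m−2)} as measures on Ω^{2m−2}. In particular, there exists a mixture of measures with m components that is not (2m−2)-identifiable. -/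

import Mathlib

open MeasureTheory Polynomial

lemma basis_coeff {F : Type*} [Field F] {ι : Type*} [DecidableEq ι] {s : Finset ι} (v : ι → F)
    {i : ι} (hi : i ∈ s) :
    (Lagrange.basis s v i).coeff (s.card - 1) = Lagrange.nodalWeight s v i := by
  rw [Lagrange.basis]
  have h : ∏ j ∈ s.erase i, Lagrange.basisDivisor (v i) (v j)
      = C (Lagrange.nodalWeight s v i) * Lagrange.nodal (s.erase i) v := by
    rw [Lagrange.nodalWeight, map_prod, Lagrange.nodal_eq, ← Finset.prod_mul_distrib]
    exact Finset.prod_congr rfl fun j _ => by rw [Lagrange.basisDivisor]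
  rw [h, coeff_C_mul]
  have hm : (Lagrange.nodal (s.erase i) v).Monic := Lagrange.nodal_monic
  have hd : (Lagrange.nodal (s.erase i) v).natDegree = s.card - 1 := by
    rw [Lagrange.natDegree_nodal, Finset.card_erase_of_mem hi]
  rw [← hd, hm.coeff_natDegree, mul_one]

lemma sum_nodalWeight_mul_eval {F : Type*} [Field F] {ι : Type*} [DecidableEq ι] {s : Finset ι}
    {v : ι → F} (hvs : Set.InjOn v s) {f : F[X]} (hf : f.degree < s.card) :
    ∑ i ∈ s, Lagrange.nodalWeight s v i * f.eval (v i) = f.coeff (s.card - 1) := by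
  conv_rhs => rw [Lagrange.eq_interpolate hvs hf]
  rw [Lagrange.interpolate_apply, finset_sum_coeff]
  exact Finset.sum_congr rfl fun i hi => by
    rw [coeff_C_mul, basis_coeff v hi, mul_comm]

open MeasureTheory Polynomial

lemma quad (m : ℕ) (hm : 1 ≤ m) :
    ∃ (p q a b : Fin m → ℝ),
      (∀ i, 0 < p i ∧ p i < 1) ∧ (∀ j, 0 < q j ∧ q j < 1) ∧
      Function.Injective p ∧ Function.Injective q ∧ (∀ i j, p i ≠ q j) ∧
      (∀ i, 0 < a i) ∧ (∀ j, 0 < b j) ∧ (∑ i, a i = 1) ∧ (∑ j, b j = 1) ∧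
      (∀ f : ℝ[X], f.natDegree ≤ 2 * m - 2 →
        ∑ i, a i * f.eval (p i) = ∑ j, b j * f.eval (q j)) := by
  classical
  set N := 2 * m with hN
  have hN2 : 2 ≤ N := by omega
  set t : Fin N → ℝ := fun k => ((k : ℕ) + 1) / ((N : ℝ) + 1) with ht
  have hNpos : (0 : ℝ) < (N : ℝ) + 1 := by positivity
  have ht_inj : Function.Injective t := by
    intro k l h
    simp only [ht, div_left_inj' hNpos.ne'] at h
    exact Fin.ext (by exact_mod_cast (add_right_cancel h))
  have ht_mem : ∀ k, 0 < t k ∧ t k < 1 := by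
    intro k
    constructor
    · positivity
    · rw [div_lt_one hNpos]
      have : (k : ℕ) < N := k.isLt
      push_cast
      linarith [(by exact_mod_cast this : ((k:ℕ):ℝ) < (N:ℝ))]
  have hrev : ∀ k : Fin N, t k.rev = 1 - t k := by
    intro k
    have hk1 : (k : ℕ) + 1 ≤ N := k.isLt
    have hval : ((k.rev : ℕ) : ℝ) = (N : ℝ) - ((k : ℕ) + 1) := by
      rw [Fin.val_rev]
      push_cast [Nat.cast_sub hk1]
      ring
    rw [ht]
    simp only
    rw [hval]
    field_simp
    ring
  have hinjOn : Set.InjOn t (Finset.univ : Finset (Fin N)) := ht_inj.injOn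
  set c : Fin N → ℝ := Lagrange.nodalWeight Finset.univ t with hc
  have hc0 : ∀ k, c k ≠ 0 := fun k =>
    Lagrange.nodalWeight_ne_zero hinjOn (Finset.mem_univ k)
  have card_erase : ∀ k : Fin N, (Finset.univ.erase k).card = N - 1 := by
    intro k
    rw [Finset.card_erase_of_mem (Finset.mem_univ k), Finset.card_univ, Fintype.card_fin]
  have hcrev : ∀ k, c (Fin.rev k) = - c k := by
    intro k
    rw [hc]
    unfold Lagrange.nodalWeight
    have step1 : ∏ j ∈ Finset.univ.erase k.rev, (t k.rev - t j)⁻¹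
        = ∏ j ∈ Finset.univ.erase k, (t k.rev - t j.rev)⁻¹ := by
      refine Finset.prod_nbij' Fin.rev Fin.rev ?_ ?_ ?_ ?_ ?_ <;>
        simp [Fin.rev_injective.ne_iff, Fin.rev_eq_iff]
    rw [step1]
    have step2 : ∀ j ∈ Finset.univ.erase k, (t k.rev - t j.rev)⁻¹ = (-1) * (t k - t j)⁻¹ := by
      intro j _
      rw [hrev, hrev]
      rw [show (1 - t k) - (1 - t j) = -(t k - t j) by ring, inv_neg]
      ring
    rw [Finset.prod_congr rfl step2, Finset.prod_mul_distrib, Finset.prod_const, card_erase]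
    have hodd : Odd (N - 1) := ⟨m - 1, by omega⟩
    rw [hodd.neg_one_pow]
    ring
  set P : Finset (Fin N) := Finset.univ.filter (fun k => 0 < c k) with hP
  set Q : Finset (Fin N) := Finset.univ.filter (fun k => c k < 0) with hQ
  have hQeq : Finset.univ.filter (fun k => ¬ 0 < c k) = Q := by
    apply Finset.filter_congr
    intro k _
    simp only [not_lt, eq_iff_iff]
    exact ⟨fun h => lt_of_le_of_ne h (hc0 k), le_of_lt⟩
  have hcards : P.card = Q.card := by
    refine Finset.card_nbij' Fin.rev Fin.rev ?_ ?_ ?_ ?_ <;>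
      intro k hk <;> simp only [hP, hQ, Finset.coe_filter, Set.mem_setOf_eq,
        Finset.mem_univ, true_and, Finset.mem_coe, Finset.mem_filter] at hk ⊢ <;>
      simp [hcrev, hk, Fin.rev_rev]
  have hsplitcard : P.card + Q.card = N := by
    rw [← hQeq]
    rw [Finset.card_filter_add_card_filter_not]
    simp [Finset.card_univ]
  have hPcard : P.card = m := by omega
  have hQcard : Q.card = m := by omega
  have huniv : ∀ f : ℝ[X], f.natDegree ≤ 2 * m - 2 →
      ∑ k, c k * f.eval (t k) = 0 := by
    intro f hf
    have hcard : (Finset.univ : Finset (Fin N)).card = N := by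
      rw [Finset.card_univ, Fintype.card_fin]
    have hdeg : f.degree < (Finset.univ : Finset (Fin N)).card := by
      refine lt_of_le_of_lt degree_le_natDegree ?_
      rw [hcard]
      exact_mod_cast (by omega : f.natDegree < N)
    have := sum_nodalWeight_mul_eval hinjOn hdeg
    rw [hcard] at this
    rw [← hc] at this
    rw [this]
    exact coeff_eq_zero_of_natDegree_lt (by omega)
  have hsplit : ∀ g : Fin N → ℝ, ∑ k ∈ P, g k + ∑ k ∈ Q, g k = ∑ k, g k := by
    intro g
    rw [← hQeq, hP]
    exact Finset.sum_filter_add_sum_filter_not _ _ _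
  set S : ℝ := ∑ k ∈ P, c k with hSdef
  have hPne : P.Nonempty := Finset.card_pos.mp (by omega)
  have hQne : Q.Nonempty := Finset.card_pos.mp (by omega)
  have hS : 0 < S := Finset.sum_pos (fun k hk => (Finset.mem_filter.mp hk).2) hPne
  have hkey : ∀ f : ℝ[X], f.natDegree ≤ 2 * m - 2 →
      ∑ k ∈ P, c k * f.eval (t k) = ∑ k ∈ Q, (- c k) * f.eval (t k) := by
    intro f hf
    have h0 := huniv f hf
    have h1 := hsplit (fun k => c k * f.eval (t k))
    have h2 : ∑ k ∈ Q, (- c k) * f.eval (t k) = - ∑ k ∈ Q, c k * f.eval (t k) := by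
      rw [← Finset.sum_neg_distrib]
      exact Finset.sum_congr rfl fun k _ => by ring
    rw [h2]; linarith
  have hQS : ∑ k ∈ Q, (- c k) = S := by
    have := hkey 1 (by simp)
    simpa using this.symm
  -- index equivalences
  have eP := P.equivFinOfCardEq hPcard
  have eQ := Q.equivFinOfCardEq hQcard
  set kP : Fin m → Fin N := fun i => (eP.symm i : Fin N) with hkP
  set kQ : Fin m → Fin N := fun j => (eQ.symm j : Fin N) with hkQ
  have hkPmem : ∀ i, kP i ∈ P := fun i => (eP.symm i).2
  have hkQmem : ∀ j, kQ j ∈ Q := fun j => (eQ.symm j).2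
  have hkPinj : Function.Injective kP :=
    Subtype.val_injective.comp eP.symm.injective
  have hkQinj : Function.Injective kQ :=
    Subtype.val_injective.comp eQ.symm.injective
  have hsumP : ∀ g : Fin N → ℝ, ∑ i, g (kP i) = ∑ k ∈ P, g k := by
    intro g
    rw [← Finset.sum_coe_sort P g]
    exact Equiv.sum_comp eP.symm (fun z => g ↑z)
  have hsumQ : ∀ g : Fin N → ℝ, ∑ j, g (kQ j) = ∑ k ∈ Q, g k := by
    intro g
    rw [← Finset.sum_coe_sort Q g]
    exact Equiv.sum_comp eQ.symm (fun z => g ↑z)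
  refine ⟨fun i => t (kP i), fun j => t (kQ j), fun i => c (kP i) / S,
    fun j => - c (kQ j) / S, fun i => ht_mem _, fun j => ht_mem _,
    ht_inj.comp hkPinj, ht_inj.comp hkQinj, ?_, ?_, ?_, ?_, ?_, ?_⟩
  · intro i j h
    have hkk : kP i = kQ j := ht_inj h
    have h1 : 0 < c (kP i) := (Finset.mem_filter.mp (hkPmem i)).2
    have h2 : c (kQ j) < 0 := (Finset.mem_filter.mp (hkQmem j)).2
    rw [hkk] at h1
    linarith
  · intro i
    exact div_pos (Finset.mem_filter.mp (hkPmem i)).2 hS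
  · intro j
    have := (Finset.mem_filter.mp (hkQmem j)).2
    exact div_pos (by linarith) hS
  · rw [hsumP (fun k => c k / S), ← Finset.sum_div, ← hSdef, div_self (ne_of_gt hS)]
  · rw [hsumQ (fun k => - c k / S), ← Finset.sum_div, hQS, div_self (ne_of_gt hS)]
  · intro f hf
    rw [hsumP (fun k => c k / S * f.eval (t k)), hsumQ (fun k => - c k / S * f.eval (t k))]
    have := hkey f hf
    calc ∑ k ∈ P, c k / S * f.eval (t k) = ∑ k ∈ P, (c k * f.eval (t k)) / S :=
          Finset.sum_congr rfl fun k _ => by ring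
      _ = (∑ k ∈ P, c k * f.eval (t k)) / S := by rw [← Finset.sum_div]
      _ = (∑ k ∈ Q, (- c k) * f.eval (t k)) / S := by rw [this]
      _ = ∑ k ∈ Q, ((- c k) * f.eval (t k)) / S := by rw [← Finset.sum_div]
      _ = ∑ k ∈ Q, - c k / S * f.eval (t k) :=
          Finset.sum_congr rfl fun k _ => by ring

/-- **Theorem 2 (non-identifiability).** On any measurable space whose σ-algebra is
nontrivial, for every `m ≥ 1` there are two distinct mixtures of `m` pairwise distinct
probability measures each with equal `(2m-2)`-fold product laws; i.e. some mixture of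
`m` components is not `(2m-2)`-identifiable. -/
theorem exists_mixture_not_identifiable
    {Ω : Type*} [MeasurableSpace Ω] (F : Set Ω) (hF : MeasurableSet F)
    (hFne : F.Nonempty) (hFcne : Fᶜ.Nonempty) (m : ℕ) (hm : 1 ≤ m) :
    ∃ (μ ν : Fin m → Measure Ω) (a b : Fin m → ℝ),
      (∀ i, IsProbabilityMeasure (μ i)) ∧ (∀ j, IsProbabilityMeasure (ν j)) ∧
      Function.Injective μ ∧ Function.Injective ν ∧ (∀ i j, μ i ≠ ν j) ∧
      (∀ i, 0 < a i) ∧ (∀ j, 0 < b j) ∧ (∑ i, a i = 1) ∧ (∑ j, b j = 1) ∧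
      ∑ i, ENNReal.ofReal (a i) • Measure.pi (fun _ : Fin (2 * m - 2) => μ i)
        = ∑ j, ENNReal.ofReal (b j) • Measure.pi (fun _ : Fin (2 * m - 2) => ν j) := by
  classical
  obtain ⟨x, hx⟩ := hFne
  obtain ⟨y, hy⟩ := hFcne
  obtain ⟨p, q, a, b, hp, hq, hpinj, hqinj, hpq, ha, hb, hsa, hsb, hquad⟩ := quad m hm
  set n := 2 * m - 2 with hn
  set M : ℝ → Measure Ω := fun r =>
    ENNReal.ofReal r • Measure.dirac x + ENNReal.ofReal (1 - r) • Measure.dirac y with hM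
  have hMapp : ∀ r : ℝ, 0 ≤ r → r ≤ 1 → ∀ S : Set Ω, MeasurableSet S →
      M r S = ENNReal.ofReal (r * (if x ∈ S then (1:ℝ) else 0)
        + (1 - r) * (if y ∈ S then (1:ℝ) else 0)) := by
    intro r h0 h1 S hS
    rw [hM]
    simp only [Measure.coe_add, Pi.add_apply, Measure.smul_apply, smul_eq_mul,
      Measure.dirac_apply' _ hS, Set.indicator_apply, Pi.one_apply]
    have h2 : (0:ℝ) ≤ (if x ∈ S then (1:ℝ) else 0) := by split_ifs <;> norm_num
    have h3 : (0:ℝ) ≤ (if y ∈ S then (1:ℝ) else 0) := by split_ifs <;> norm_num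
    have h4 : (0:ℝ) ≤ 1 - r := by linarith
    rw [ENNReal.ofReal_add (by positivity) (by positivity),
      ENNReal.ofReal_mul h0, ENNReal.ofReal_mul h4]
    congr 1
    · congr 1
      split_ifs <;> simp
    · congr 1
      split_ifs <;> simp
  have hMprob : ∀ r : ℝ, 0 ≤ r → r ≤ 1 → IsProbabilityMeasure (M r) := by
    intro r h0 h1
    constructor
    rw [hMapp r h0 h1 Set.univ MeasurableSet.univ]
    simp only [Set.mem_univ, if_true]
    rw [show r * 1 + (1 - r) * 1 = 1 by ring]
    exact ENNReal.ofReal_one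
  have hMF : ∀ r : ℝ, 0 ≤ r → r ≤ 1 → M r F = ENNReal.ofReal r := by
    intro r h0 h1
    rw [hMapp r h0 h1 F hF, if_pos hx, if_neg (by simpa using hy)]
    congr 1
    ring
  have hMinj : ∀ r r' : ℝ, 0 ≤ r → r ≤ 1 → 0 ≤ r' → r' ≤ 1 → M r = M r' → r = r' := by
    intro r r' h0 h1 h0' h1' h
    have h2 : M r F = M r' F := by rw [h]
    rw [hMF r h0 h1, hMF r' h0' h1'] at h2
    exact (ENNReal.ofReal_eq_ofReal_iff h0 h0').mp h2
  -- the polynomial attached to a box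
  set PS : (Fin n → Set Ω) → Polynomial ℝ := fun B =>
    ∏ k, (Polynomial.C ((if x ∈ B k then (1:ℝ) else 0) - (if y ∈ B k then (1:ℝ) else 0))
      * Polynomial.X + Polynomial.C (if y ∈ B k then (1:ℝ) else 0)) with hPS
  have hPSdeg : ∀ B, (PS B).natDegree ≤ 2 * m - 2 := by
    intro B
    simp only [hPS]
    refine le_trans (Polynomial.natDegree_prod_le _ _) (le_trans (Finset.sum_le_card_nsmul _ _ 1
      fun k _ => Polynomial.natDegree_linear_le) ?_)
    simp [hn]
  have hPSeval : ∀ B : Fin n → Set Ω, ∀ r : ℝ,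
      (PS B).eval r = ∏ k, (r * (if x ∈ B k then (1:ℝ) else 0)
        + (1 - r) * (if y ∈ B k then (1:ℝ) else 0)) := by
    intro B r
    rw [hPS]
    simp only [Polynomial.eval_prod, Polynomial.eval_add, Polynomial.eval_mul,
      Polynomial.eval_C, Polynomial.eval_X]
    exact Finset.prod_congr rfl fun k _ => by ring
  have hPSnonneg : ∀ B : Fin n → Set Ω, ∀ r : ℝ, 0 ≤ r → r ≤ 1 → 0 ≤ (PS B).eval r := by
    intro B r h0 h1
    rw [hPSeval]
    refine Finset.prod_nonneg fun k _ => ?_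
    have h2 : (0:ℝ) ≤ (if x ∈ B k then (1:ℝ) else 0) := by split_ifs <;> norm_num
    have h3 : (0:ℝ) ≤ (if y ∈ B k then (1:ℝ) else 0) := by split_ifs <;> norm_num
    have : (0:ℝ) ≤ 1 - r := by linarith
    positivity
  -- value of the product measure on a box
  have hrect : ∀ r : ℝ, 0 ≤ r → r ≤ 1 → ∀ B : Fin n → Set Ω, (∀ k, MeasurableSet (B k)) →
      Measure.pi (fun _ : Fin n => M r) (Set.univ.pi B) = ENNReal.ofReal ((PS B).eval r) := by
    intro r h0 h1 B hB
    haveI : ∀ k : Fin n, IsProbabilityMeasure ((fun _ : Fin n => M r) k) :=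
      fun _ => hMprob r h0 h1
    rw [Measure.pi_pi, hPSeval]
    rw [ENNReal.ofReal_prod_of_nonneg]
    · refine Finset.prod_congr rfl fun k _ => ?_
      rw [hMapp r h0 h1 (B k) (hB k)]
    · intro k _
      have h2 : (0:ℝ) ≤ (if x ∈ B k then (1:ℝ) else 0) := by split_ifs <;> norm_num
      have h3 : (0:ℝ) ≤ (if y ∈ B k then (1:ℝ) else 0) := by split_ifs <;> norm_num
      have : (0:ℝ) ≤ 1 - r := by linarith
      positivity
  -- value of a mixture on a box
  have hmix : ∀ (r : Fin m → ℝ), (∀ i, 0 ≤ r i ∧ r i ≤ 1) → ∀ (w : Fin m → ℝ),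
      (∀ i, 0 ≤ w i) → ∀ B : Fin n → Set Ω, (∀ k, MeasurableSet (B k)) →
      (∑ i, ENNReal.ofReal (w i) • Measure.pi (fun _ : Fin n => M (r i))) (Set.univ.pi B)
        = ENNReal.ofReal (∑ i, w i * (PS B).eval (r i)) := by
    intro r hr w hw B hB
    rw [Measure.finset_sum_apply]
    rw [ENNReal.ofReal_sum_of_nonneg (fun i _ =>
      mul_nonneg (hw i) (hPSnonneg B (r i) (hr i).1 (hr i).2))]
    refine Finset.sum_congr rfl fun i _ => ?_
    rw [Measure.smul_apply, smul_eq_mul, hrect (r i) (hr i).1 (hr i).2 B hB,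
      ← ENNReal.ofReal_mul (hw i)]
  refine ⟨fun i => M (p i), fun j => M (q j), a, b,
    fun i => hMprob _ (hp i).1.le (hp i).2.le, fun j => hMprob _ (hq j).1.le (hq j).2.le,
    ?_, ?_, ?_, ha, hb, hsa, hsb, ?_⟩
  · intro i j h
    exact hpinj (hMinj _ _ (hp i).1.le (hp i).2.le (hp j).1.le (hp j).2.le h)
  · intro i j h
    exact hqinj (hMinj _ _ (hq i).1.le (hq i).2.le (hq j).1.le (hq j).2.le h)
  · intro i j h
    exact hpq i j (hMinj _ _ (hp i).1.le (hp i).2.le (hq j).1.le (hq j).2.le h)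
  · -- equality of the two mixtures of product measures
    have hmixP := hmix p (fun i => ⟨(hp i).1.le, (hp i).2.le⟩) a (fun i => (ha i).le)
    have hmixQ := hmix q (fun j => ⟨(hq j).1.le, (hq j).2.le⟩) b (fun j => (hb j).le)
    haveI : IsFiniteMeasure (∑ i, ENNReal.ofReal (a i) •
        Measure.pi (fun _ : Fin n => M (p i))) := by
      constructor
      rw [show (Set.univ : Set (Fin n → Ω)) = Set.univ.pi (fun _ => Set.univ) from
        (Set.pi_univ _).symm]
      rw [hmixP _ (fun _ => MeasurableSet.univ)]
      exact ENNReal.ofReal_lt_top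
    refine MeasureTheory.ext_of_generate_finite _ generateFrom_pi.symm
      isPiSystem_pi ?_ ?_
    · rintro s ⟨B, hB, rfl⟩
      have hBm : ∀ k, MeasurableSet (B k) := fun k => hB k (Set.mem_univ k)
      rw [hmixP _ hBm, hmixQ _ hBm, hquad (PS B) (hPSdeg B)]
    · rw [show (Set.univ : Set (Fin n → Ω)) = Set.univ.pi (fun _ => Set.univ) from
        (Set.pi_univ _).symm]
      rw [hmixP _ (fun _ => MeasurableSet.univ), hmixQ _ (fun _ => MeasurableSet.univ),
        hquad (PS _) (hPSdeg _)]
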